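/- Let K be a convex body in R^d and let lambda be a real with 0 < lambda <= 1/5. If x, y ∈ K are such that the Macbeath regions M^lambda(x) and M^lambda(y) have nonempty intersection, then M^lambda(y) ⊆ M^{4·lambda}(x). -/
import Mathlib

open Set Metric
open scoped Pointwise

/-- The Macbeath region `M^λ(x) = x + λ((K − x) ∩ (x − K))`. -/
def macbeath {d : ℕ} (K : Set (EuclideanSpace ℝ (Fin d)))
    (x : EuclideanSpace ℝ (Fin d)) (lam : ℝ) : Set (EuclideanSpace ℝ (Fin d)) :=
  (fun v => x + lam • v) '' ((K - {x}) ∩ ({x} - K))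

lemma mem_macbeath_iff {d : ℕ} {K : Set (EuclideanSpace ℝ (Fin d))}
    {x w : EuclideanSpace ℝ (Fin d)} {lam : ℝ} :
    w ∈ macbeath K x lam ↔ ∃ v, x + v ∈ K ∧ x - v ∈ K ∧ w = x + lam • v := by
  constructor
  · rintro ⟨v, ⟨⟨k, hk, x', hx', hkx⟩, ⟨x'', hx'', k', hk', hxk⟩⟩, rfl⟩
    simp only [Set.mem_singleton_iff] at hx' hx''
    subst hx' hx''
    exact ⟨v, by rw [← hkx]; simpa using hk, by rw [← hxk]; simpa using hk', rfl⟩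
  · rintro ⟨v, h1, h2, rfl⟩
    exact ⟨v, ⟨⟨x + v, h1, x, rfl, by module⟩, ⟨x, rfl, x - v, h2, by module⟩⟩, rfl⟩

lemma convex_comb4 {E : Type*} [AddCommGroup E] [Module ℝ E] {s : Set E} (hs : Convex ℝ s)
    {p q r t : E} (hp : p ∈ s) (hq : q ∈ s) (hr : r ∈ s) (ht : t ∈ s)
    {a b c e : ℝ} (ha : 0 ≤ a) (hb : 0 ≤ b) (hc : 0 ≤ c) (he : 0 ≤ e)
    (hsum : a + b + c + e = 1) : a • p + b • q + c • r + e • t ∈ s := by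
  have := hs.sum_mem (t := Finset.univ) (w := ![a, b, c, e]) (z := ![p, q, r, t])
    (by intro i _; fin_cases i <;> simpa)
    (by simp [Fin.sum_univ_four]; linarith)
    (by intro i _; fin_cases i <;> simpa)
  simpa [Fin.sum_univ_four] using this

/-- Lemma `mac-mac`: if `0 < λ ≤ 1/5` and the Macbeath regions
`M^λ(x)` and `M^λ(y)` of two points `x, y ∈ K` intersect, then `M^λ(y) ⊆ M^{4λ}(x)`. -/
theorem macbeath_subset_of_inter (d : ℕ)
    (K : Set (EuclideanSpace ℝ (Fin d)))
    (hK_compact : IsCompact K) (hK_conv : Convex ℝ K)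
    (hK_int : (interior K).Nonempty)
    (lam : ℝ) (hlam0 : 0 < lam) (hlam : lam ≤ 1 / 5)
    (x y : EuclideanSpace ℝ (Fin d)) (hx : x ∈ K) (hy : y ∈ K)
    (hinter : (macbeath K x lam ∩ macbeath K y lam).Nonempty) :
    macbeath K y lam ⊆ macbeath K x (4 * lam) := by
  obtain ⟨z, hzx, hzy⟩ := hinter
  obtain ⟨a, hxa, hxa', hz1⟩ := mem_macbeath_iff.mp hzx
  obtain ⟨b, hyb, hyb', hz2⟩ := mem_macbeath_iff.mp hzy
  have hne1 : (1 : ℝ) + lam ≠ 0 := by linarith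
  have hne2 : (1 : ℝ) - lam ≠ 0 := by linarith
  have hyx : y = x + lam • (a - b) := by
    have h : x + lam • a = y + lam • b := hz1.symm.trans hz2
    linear_combination (norm := module) -h
  intro w hw
  obtain ⟨c, hyc, hyc', hwc⟩ := mem_macbeath_iff.mp hw
  rw [mem_macbeath_iff]
  refine ⟨(1/4 : ℝ) • (a - b + c), ?_, ?_, ?_⟩
  · have key : x + (1/4 : ℝ) • (a - b + c)
        = ((1 - lam)/(4*(1+lam))) • (x + a) + ((1 - lam)/(4*(1+lam))) • (y - b)
          + (1/4 : ℝ) • (y + c)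
          + (1 - ((1 - lam)/(4*(1+lam)) + (1 - lam)/(4*(1+lam)) + 1/4)) • x := by
      rw [hyx]
      match_scalars <;> field_simp <;> ring
    rw [key]
    have hb1 : (0:ℝ) ≤ (1 - lam)/(4*(1+lam)) := by
      apply div_nonneg <;> linarith
    have hb2 : (1 - lam)/(4*(1+lam)) ≤ 1/4 := by
      rw [div_le_iff₀ (by linarith)]; linarith
    exact convex_comb4 hK_conv hxa hyb' hyc hx hb1 hb1 (by norm_num)
      (by linarith) (by ring)
  · have key : x - (1/4 : ℝ) • (a - b + c)
        = ((1 + lam)/(4*(1-lam))) • (x - a) + ((1 + lam)/(4*(1-lam))) • (y + b)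
          + (1/4 : ℝ) • (y - c)
          + (1 - ((1 + lam)/(4*(1-lam)) + (1 + lam)/(4*(1-lam)) + 1/4)) • x := by
      rw [hyx]
      match_scalars <;> field_simp <;> ring
    rw [key]
    have hb1 : (0:ℝ) ≤ (1 + lam)/(4*(1-lam)) := by
      apply div_nonneg <;> linarith
    have hb2 : (1 + lam)/(4*(1-lam)) ≤ 3/8 := by
      rw [div_le_iff₀ (by linarith)]; linarith
    exact convex_comb4 hK_conv hxa' hyb hyc' hx hb1 hb1 (by norm_num)
      (by linarith) (by ring)
  · rw [hwc, hyx]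
    match_scalars <;> ring
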